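/- Let n be a positive integer and let a, b be n×n real symmetric positive definite matrices. Then the matrix a b² a is symmetric positive definite, and the matrix k := b^{−1} a^{−1} (a b² a)^{1/2} satisfies k kᵀ = I, kᵀ k = I (i.e., k is orthogonal), and a b k = (a b² a)^{1/2}; in particular a b k is symmetric positive definite. -/

import Mathlib

open Matrix

section OldSqrt

open scoped ComplexOrder

/-- The positive semidefinite square root of a positive semidefinite matrix
(the definition `Matrix.PosSemidef.sqrt` of the older Mathlib, since removed). -/
noncomputable def Matrix.PosSemidef.sqrt {n 𝕜 : Type*} [Fintype n] [DecidableEq n] [RCLike 𝕜]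
    {A : Matrix n n 𝕜} (hA : A.PosSemidef) : Matrix n n 𝕜 :=
  (hA.isHermitian.eigenvectorUnitary : Matrix n n 𝕜) *
    diagonal ((↑) ∘ (√·) ∘ hA.isHermitian.eigenvalues) *
    (star (hA.isHermitian.eigenvectorUnitary : Matrix n n 𝕜))

end OldSqrt

open scoped ComplexOrder in
theorem Matrix.PosSemidef.posSemidef_sqrt {n 𝕜 : Type*} [Fintype n] [DecidableEq n] [RCLike 𝕜]
    {A : Matrix n n 𝕜} (hA : A.PosSemidef) : hA.sqrt.PosSemidef := by
  unfold Matrix.PosSemidef.sqrt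
  refine PosSemidef.mul_mul_conjTranspose_same ?_ _
  refine posSemidef_diagonal_iff.2 fun i => ?_
  simp only [Function.comp_apply]
  exact_mod_cast Real.sqrt_nonneg _

open scoped ComplexOrder in
theorem Matrix.PosSemidef.sqrt_mul_self {n 𝕜 : Type*} [Fintype n] [DecidableEq n] [RCLike 𝕜]
    {A : Matrix n n 𝕜} (hA : A.PosSemidef) : hA.sqrt * hA.sqrt = A := by
  unfold Matrix.PosSemidef.sqrt
  have hU : star (hA.isHermitian.eigenvectorUnitary : Matrix n n 𝕜) *
      (hA.isHermitian.eigenvectorUnitary : Matrix n n 𝕜) = 1 :=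
    Unitary.star_mul_self_of_mem hA.isHermitian.eigenvectorUnitary.2
  have hD : diagonal (((↑) : ℝ → 𝕜) ∘ (√·) ∘ hA.isHermitian.eigenvalues) *
      diagonal (((↑) : ℝ → 𝕜) ∘ (√·) ∘ hA.isHermitian.eigenvalues) =
      diagonal (((↑) : ℝ → 𝕜) ∘ hA.isHermitian.eigenvalues) := by
    rw [diagonal_mul_diagonal]
    congr 1
    funext i
    simp only [Function.comp_apply]
    rw [← RCLike.ofReal_mul, Real.mul_self_sqrt (hA.eigenvalues_nonneg i)]
  conv_rhs => rw [hA.isHermitian.spectral_theorem, Unitary.conjStarAlgAut_apply]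
  calc _ = (hA.isHermitian.eigenvectorUnitary : Matrix n n 𝕜) *
        (diagonal (((↑) : ℝ → 𝕜) ∘ (√·) ∘ hA.isHermitian.eigenvalues) *
        (star (hA.isHermitian.eigenvectorUnitary : Matrix n n 𝕜) *
        (hA.isHermitian.eigenvectorUnitary : Matrix n n 𝕜)) *
        diagonal (((↑) : ℝ → 𝕜) ∘ (√·) ∘ hA.isHermitian.eigenvalues)) *
        star (hA.isHermitian.eigenvectorUnitary : Matrix n n 𝕜) := by
          simp only [Matrix.mul_assoc]
    _ = _ := by rw [hU, Matrix.mul_one, hD]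

private lemma posDef_transpose_mul_self {m : Type*} [Fintype m] [DecidableEq m]
    (c : Matrix m m ℝ) (hc : IsUnit c) : (cᵀ * c).PosDef := by
  have hpsd := Matrix.posSemidef_conjTranspose_mul_self c
  rw [c.conjTranspose_eq_transpose_of_trivial] at hpsd
  refine PosDef.of_dotProduct_mulVec_pos hpsd.1 fun x hx => ?_
  have hcx : c *ᵥ x ≠ 0 := by
    intro h
    exact hx (by simpa using (Matrix.mulVec_injective_iff_isUnit.2 hc) (h.trans (c.mulVec_zero).symm))
  have heq : (star x) ⬝ᵥ (cᵀ * c) *ᵥ x = (c *ᵥ x) ⬝ᵥ (c *ᵥ x) := by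
    rw [← Matrix.mulVec_mulVec, Matrix.dotProduct_mulVec, Matrix.vecMul_transpose]
    simp [star_trivial]
  rw [heq]
  have h := (dotProduct_self_eq_zero (v := c *ᵥ x)).not.2 hcx
  have hnonneg : 0 ≤ (c *ᵥ x) ⬝ᵥ (c *ᵥ x) :=
    Finset.sum_nonneg fun i _ => mul_self_nonneg _
  exact lt_of_le_of_ne hnonneg (Ne.symm h)

private lemma posSemidef_posDef_of_isUnit {m : Type*} [Fintype m] [DecidableEq m]
    {M : Matrix m m ℝ} (hM : M.PosSemidef) (hu : IsUnit M) : M.PosDef := by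
  have h := hM.sqrt_mul_self
  have hsym : hM.sqrtᵀ = hM.sqrt := by
    have := hM.posSemidef_sqrt.1
    rwa [Matrix.IsHermitian, conjTranspose_eq_transpose_of_trivial] at this
  have hr : IsUnit hM.sqrt := by
    rw [Matrix.isUnit_iff_isUnit_det]
    have hd : M.det = hM.sqrt.det * hM.sqrt.det := by rw [← Matrix.det_mul, h]
    have h2 := (Matrix.isUnit_iff_isUnit_det M).1 hu
    rw [hd] at h2
    exact isUnit_of_mul_isUnit_left h2
  have hres := posDef_transpose_mul_self hM.sqrt hr
  rw [hsym, h] at hres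
  exact hres

/-- Lemma C.4: for real SPD matrices `a, b`, the matrix `a b² a` is SPD, and
`k = b⁻¹ a⁻¹ (a b² a)^{1/2}` is orthogonal with `a b k = (a b² a)^{1/2}`; in particular
`a b k` is SPD. -/
theorem spd_orthogonal_decomposition {n : ℕ} (hn : 0 < n)
    (a b : Matrix (Fin n) (Fin n) ℝ)
    (ha : a.PosDef) (hb : b.PosDef) :
    ∃ hpd : (a * (b * b) * a).PosDef,
      (b⁻¹ * a⁻¹ * hpd.posSemidef.sqrt) * (b⁻¹ * a⁻¹ * hpd.posSemidef.sqrt)ᵀ = 1 ∧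
      (b⁻¹ * a⁻¹ * hpd.posSemidef.sqrt)ᵀ * (b⁻¹ * a⁻¹ * hpd.posSemidef.sqrt) = 1 ∧
      a * b * (b⁻¹ * a⁻¹ * hpd.posSemidef.sqrt) = hpd.posSemidef.sqrt ∧
      (a * b * (b⁻¹ * a⁻¹ * hpd.posSemidef.sqrt)).PosDef := by
  have hat : aᵀ = a := by
    have := ha.isHermitian
    rwa [Matrix.IsHermitian, conjTranspose_eq_transpose_of_trivial] at this
  have hbt : bᵀ = b := by
    have := hb.isHermitian
    rwa [Matrix.IsHermitian, conjTranspose_eq_transpose_of_trivial] at this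
  have hau : IsUnit a := ha.isUnit
  have hbu : IsUnit b := hb.isUnit
  have hba : IsUnit (b * a) := hbu.mul hau
  have key : a * (b * b) * a = (b * a)ᵀ * (b * a) := by
    rw [transpose_mul, hat, hbt]
    simp only [Matrix.mul_assoc]
  have hpd : (a * (b * b) * a).PosDef := by
    rw [key]; exact posDef_transpose_mul_self _ hba
  set s := hpd.posSemidef.sqrt with hs
  have hs2 : s * s = a * (b * b) * a := hpd.posSemidef.sqrt_mul_self
  have hssym : sᵀ = s := by
    have := hpd.posSemidef.posSemidef_sqrt.1
    rwa [Matrix.IsHermitian, conjTranspose_eq_transpose_of_trivial] at this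
  have hsu : IsUnit s := by
    rw [Matrix.isUnit_iff_isUnit_det]
    have hd : (a * (b * b) * a).det = s.det * s.det := by rw [← Matrix.det_mul, hs2]
    have h2 := (Matrix.isUnit_iff_isUnit_det _).1 hpd.isUnit
    rw [hd] at h2
    exact isUnit_of_mul_isUnit_left h2
  letI := hau.invertible
  letI := hbu.invertible
  letI := hsu.invertible
  have hkt : (b⁻¹ * a⁻¹ * s)ᵀ = s * (a⁻¹ * b⁻¹) := by
    simp only [transpose_mul, hssym, transpose_nonsing_inv, hat, hbt, Matrix.mul_assoc]
  have h1 : (b⁻¹ * a⁻¹ * s) * (b⁻¹ * a⁻¹ * s)ᵀ = 1 := by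
    rw [hkt]
    calc b⁻¹ * a⁻¹ * s * (s * (a⁻¹ * b⁻¹))
        = b⁻¹ * (a⁻¹ * ((s * s) * a⁻¹) * b⁻¹) := by
          simp only [Matrix.mul_assoc]
      _ = 1 := by
          rw [hs2]
          simp [Matrix.mul_assoc, Matrix.mul_inv_cancel_right_of_invertible,
            Matrix.inv_mul_cancel_left_of_invertible, Matrix.mul_inv_of_invertible]
  refine ⟨hpd, h1, mul_eq_one_comm.1 h1, ?_, ?_⟩
  · calc a * b * (b⁻¹ * a⁻¹ * s) = a * (b * b⁻¹) * a⁻¹ * s := by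
          simp only [Matrix.mul_assoc]
      _ = s := by
          rw [Matrix.mul_inv_of_invertible, Matrix.mul_one, Matrix.mul_inv_of_invertible,
            Matrix.one_mul]
  · have h3 : a * b * (b⁻¹ * a⁻¹ * s) = s := by
      calc a * b * (b⁻¹ * a⁻¹ * s) = a * (b * b⁻¹) * a⁻¹ * s := by
            simp only [Matrix.mul_assoc]
        _ = s := by
            rw [Matrix.mul_inv_of_invertible, Matrix.mul_one, Matrix.mul_inv_of_invertible,
              Matrix.one_mul]
    rw [h3]
    exact posSemidef_posDef_of_isUnit hpd.posSemidef.posSemidef_sqrt hsu
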